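/- Let q be a multivariate polynomial in d real variables of degree at most s, let n ≥ 1 be an integer, and let p(x) = (q(x))^n. Then ‖p‖² ≤ n^{n·s} · ‖q‖^{2n}. -/

import Mathlib

open Finset

/-- The coefficient norm `‖p‖ = sqrt (Σ_α c_α²)` of a multivariate polynomial. -/
noncomputable def mvNorm {d : ℕ} (p : MvPolynomial (Fin d) ℝ) : ℝ :=
  Real.sqrt (∑ α ∈ p.support, (MvPolynomial.coeff α p) ^ 2)

namespace MvNormAux

/-- The degree of a multi-index. -/
def fdeg {d : ℕ} (β : Fin d →₀ ℕ) : ℕ := β.sum fun _ e => e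

lemma fdeg_add {d : ℕ} (β γ : Fin d →₀ ℕ) : fdeg (β + γ) = fdeg β + fdeg γ := by
  unfold fdeg
  exact Finsupp.sum_add_index' (fun _ => rfl) (fun _ _ _ => rfl)

lemma fdeg_single {d : ℕ} (a : Fin d) (k : ℕ) : fdeg (Finsupp.single a k) = k := by
  unfold fdeg
  exact Finsupp.sum_single_index rfl

lemma geom_le (n k : ℕ) : ∑ j ∈ range (k + 1), n ^ j ≤ (n + 1) ^ k := by
  induction k with
  | zero => simp
  | succ k ih =>
    rw [Finset.sum_range_succ]
    have h1 : n ^ (k + 1) ≤ n * (n + 1) ^ k := by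
      rw [pow_succ, mul_comm]
      exact Nat.mul_le_mul_left n (Nat.pow_le_pow_left (Nat.le_succ n) k)
    have h2 : (n + 1) ^ (k + 1) = (n + 1) ^ k + n * (n + 1) ^ k := by ring
    calc ∑ j ∈ range (k + 1), n ^ j + n ^ (k + 1)
        ≤ (n + 1) ^ k + n * (n + 1) ^ k := Nat.add_le_add ih h1
      _ = (n + 1) ^ (k + 1) := h2.symm

lemma sum_nat_antidiagonal_pow_le (n k : ℕ) :
    ∑ x ∈ Finset.HasAntidiagonal.antidiagonal k, n ^ x.2 ≤ (n + 1) ^ k := by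
  have h : ∑ x ∈ Finset.HasAntidiagonal.antidiagonal k, n ^ x.2
      = ∑ j ∈ range (k + 1), n ^ (k - j) := by
    rw [Finset.Nat.sum_antidiagonal_eq_sum_range_succ (fun i j => n ^ j) k]
  have h2 : ∑ j ∈ range (k + 1), n ^ (k - j) = ∑ j ∈ range (k + 1), n ^ j := by
    have := Finset.sum_range_reflect (fun j => n ^ j) (k + 1)
    simpa using this
  rw [h, h2]
  exact geom_le n k

/-- Key counting estimate: `∑_{(u,v): u+v=β} n^{deg v} ≤ (n+1)^{deg β}`. -/
lemma sum_antidiagonal_pow_le {d : ℕ} (n : ℕ) (β : Fin d →₀ ℕ) :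
    ∑ x ∈ Finset.HasAntidiagonal.antidiagonal β, n ^ fdeg x.2 ≤ (n + 1) ^ fdeg β := by
  induction β using Finsupp.induction with
  | zero => simp [fdeg]
  | single_add a b f haf hb ih =>
    have hfa : f a = 0 := Finsupp.notMem_support_iff.mp haf
    have key : ∑ x ∈ Finset.HasAntidiagonal.antidiagonal (Finsupp.single a b + f), n ^ fdeg x.2
        = ∑ y ∈ (Finset.HasAntidiagonal.antidiagonal b) ×ˢ (Finset.HasAntidiagonal.antidiagonal f),
            n ^ (y.1.2 + fdeg y.2.2) := by
      refine Finset.sum_nbij'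
        (fun x => ((x.1 a, x.2 a), (x.1.erase a, x.2.erase a)))
        (fun y => (Finsupp.single a y.1.1 + y.2.1, Finsupp.single a y.1.2 + y.2.2))
        ?_ ?_ ?_ ?_ ?_
      · rintro ⟨u, v⟩ hx
        rw [Finset.HasAntidiagonal.mem_antidiagonal] at hx
        simp only [Finset.mem_product, Finset.HasAntidiagonal.mem_antidiagonal]
        constructor
        · have := DFunLike.congr_fun hx a
          simpa [hfa] using this
        · have : (u + v).erase a = (Finsupp.single a b + f).erase a := by rw [hx]
          rw [Finsupp.erase_add, Finsupp.erase_add, Finsupp.erase_single,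
            Finsupp.erase_of_notMem_support haf, zero_add] at this
          exact this
      · rintro ⟨⟨i, j⟩, ⟨u, v⟩⟩ hy
        simp only [Finset.mem_product, Finset.HasAntidiagonal.mem_antidiagonal] at hy
        rw [Finset.HasAntidiagonal.mem_antidiagonal]
        obtain ⟨h1, h2⟩ := hy
        rw [← h1, ← h2, Finsupp.single_add]
        dsimp only
        abel
      · rintro ⟨u, v⟩ hx
        simp only [Prod.mk.injEq]
        exact ⟨Finsupp.single_add_erase a u, Finsupp.single_add_erase a v⟩
      · rintro ⟨⟨i, j⟩, ⟨u, v⟩⟩ hy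
        simp only [Finset.mem_product, Finset.HasAntidiagonal.mem_antidiagonal] at hy
        obtain ⟨h1, h2⟩ := hy
        have hua : u a = 0 := by
          have := DFunLike.congr_fun h2 a
          simp only [Finsupp.add_apply] at this
          omega
        have hva : v a = 0 := by
          have := DFunLike.congr_fun h2 a
          simp only [Finsupp.add_apply] at this
          omega
        have e1 : (Finsupp.single a i + u) a = i := by
          simp [Finsupp.single_eq_same, hua]
        have e2 : (Finsupp.single a j + v) a = j := by
          simp [Finsupp.single_eq_same, hva]
        have e3 : (Finsupp.single a i + u).erase a = u := by
          rw [Finsupp.erase_add, Finsupp.erase_single, zero_add]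
          exact Finsupp.erase_of_notMem_support (by simp [Finsupp.mem_support_iff, hua])
        have e4 : (Finsupp.single a j + v).erase a = v := by
          rw [Finsupp.erase_add, Finsupp.erase_single, zero_add]
          exact Finsupp.erase_of_notMem_support (by simp [Finsupp.mem_support_iff, hva])
        simp [e1, e2, e3, e4]
      · rintro ⟨u, v⟩ hx
        have : fdeg v = v a + fdeg (v.erase a) := by
          conv_lhs => rw [← Finsupp.single_add_erase a v]
          rw [fdeg_add, fdeg_single]
        simp [this]
    rw [key]
    rw [Finset.sum_product]
    have step : ∀ y1 ∈ Finset.HasAntidiagonal.antidiagonal b,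
        ∑ y2 ∈ Finset.HasAntidiagonal.antidiagonal f, n ^ (y1.2 + fdeg y2.2)
          = n ^ y1.2 * ∑ y2 ∈ Finset.HasAntidiagonal.antidiagonal f, n ^ fdeg y2.2 := by
      intro y1 _
      rw [Finset.mul_sum]
      exact Finset.sum_congr rfl fun y2 _ => pow_add n y1.2 (fdeg y2.2)
    rw [Finset.sum_congr rfl step, ← Finset.sum_mul]
    calc (∑ y1 ∈ Finset.HasAntidiagonal.antidiagonal b, n ^ y1.2) *
          (∑ y2 ∈ Finset.HasAntidiagonal.antidiagonal f, n ^ fdeg y2.2)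
        ≤ (n + 1) ^ b * (n + 1) ^ fdeg f := by
          exact Nat.mul_le_mul (sum_nat_antidiagonal_pow_le n b) ih
      _ = (n + 1) ^ fdeg (Finsupp.single a b + f) := by
          rw [fdeg_add, fdeg_single, pow_add]

/-- The polynomial whose coefficients are the squares of those of `q`. -/
noncomputable def sqPoly {d : ℕ} (q : MvPolynomial (Fin d) ℝ) : MvPolynomial (Fin d) ℝ :=
  ∑ α ∈ q.support, MvPolynomial.monomial α ((MvPolynomial.coeff α q) ^ 2)

lemma coeff_sqPoly {d : ℕ} (q : MvPolynomial (Fin d) ℝ) (β : Fin d →₀ ℕ) :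
    MvPolynomial.coeff β (sqPoly q) = (MvPolynomial.coeff β q) ^ 2 := by
  classical
  unfold sqPoly
  rw [MvPolynomial.coeff_sum]
  simp only [MvPolynomial.coeff_monomial]
  rw [Finset.sum_ite_eq' q.support β (fun α => (MvPolynomial.coeff α q) ^ 2)]
  split_ifs with h
  · rfl
  · rw [MvPolynomial.notMem_support_iff.mp h]
    ring

lemma coeff_sqPoly_pow_nonneg {d : ℕ} (q : MvPolynomial (Fin d) ℝ) (n : ℕ)
    (β : Fin d →₀ ℕ) : 0 ≤ MvPolynomial.coeff β ((sqPoly q) ^ n) := by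
  classical
  induction n generalizing β with
  | zero =>
    simp only [pow_zero, MvPolynomial.coeff_one]
    split_ifs <;> norm_num
  | succ n ih =>
    rw [pow_succ', MvPolynomial.coeff_mul]
    refine Finset.sum_nonneg fun x _ => mul_nonneg ?_ (ih x.2)
    rw [coeff_sqPoly]
    exact sq_nonneg _

/-- Pointwise bound: `(coeff β (q^n))² ≤ n^{deg β} * coeff β ((sqPoly q)^n)`. -/
lemma pointwise {d : ℕ} (q : MvPolynomial (Fin d) ℝ) (n : ℕ) (hn : 1 ≤ n) :
    ∀ β : Fin d →₀ ℕ, (MvPolynomial.coeff β (q ^ n)) ^ 2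
      ≤ (n : ℝ) ^ fdeg β * MvPolynomial.coeff β ((sqPoly q) ^ n) := by
  classical
  induction n, hn using Nat.le_induction with
  | base =>
    intro β
    rw [pow_one, pow_one, coeff_sqPoly]
    norm_num
  | succ n hn ih =>
    intro β
    push_cast
    rw [pow_succ' q n, pow_succ' (sqPoly q) n, MvPolynomial.coeff_mul,
      MvPolynomial.coeff_mul]
    set S := Finset.HasAntidiagonal.antidiagonal β with hS
    set F : (Fin d →₀ ℕ) × (Fin d →₀ ℕ) → ℝ := fun x => (n : ℝ) ^ fdeg x.2 with hF
    set G : (Fin d →₀ ℕ) × (Fin d →₀ ℕ) → ℝ := fun x =>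
      (MvPolynomial.coeff x.1 q) ^ 2 * MvPolynomial.coeff x.2 ((sqPoly q) ^ n) with hG
    set r : (Fin d →₀ ℕ) × (Fin d →₀ ℕ) → ℝ := fun x => Real.sqrt (F x * G x) with hr
    have hFnn : ∀ x, 0 ≤ F x := fun x => pow_nonneg (Nat.cast_nonneg n) _
    have hGnn : ∀ x, 0 ≤ G x := fun x =>
      mul_nonneg (sq_nonneg _) (coeff_sqPoly_pow_nonneg q n x.2)
    have habs : ∀ x ∈ S,
        |MvPolynomial.coeff x.1 q * MvPolynomial.coeff x.2 (q ^ n)| ≤ r x := by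
      intro x _
      have h1 : (MvPolynomial.coeff x.1 q * MvPolynomial.coeff x.2 (q ^ n)) ^ 2
          ≤ F x * G x := by
        rw [mul_pow]
        calc (MvPolynomial.coeff x.1 q) ^ 2 * (MvPolynomial.coeff x.2 (q ^ n)) ^ 2
            ≤ (MvPolynomial.coeff x.1 q) ^ 2 *
              ((n : ℝ) ^ fdeg x.2 * MvPolynomial.coeff x.2 ((sqPoly q) ^ n)) :=
              mul_le_mul_of_nonneg_left (ih x.2) (sq_nonneg _)
          _ = F x * G x := by rw [hF, hG]; ring
      calc |MvPolynomial.coeff x.1 q * MvPolynomial.coeff x.2 (q ^ n)|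
          = Real.sqrt ((MvPolynomial.coeff x.1 q * MvPolynomial.coeff x.2 (q ^ n)) ^ 2) := by
            rw [Real.sqrt_sq_eq_abs]
        _ ≤ r x := Real.sqrt_le_sqrt h1
    have hsum_abs : |∑ x ∈ S, MvPolynomial.coeff x.1 q * MvPolynomial.coeff x.2 (q ^ n)|
        ≤ ∑ x ∈ S, r x :=
      (Finset.abs_sum_le_sum_abs _ _).trans (Finset.sum_le_sum habs)
    have hCS : (∑ x ∈ S, r x) ^ 2 ≤ (∑ x ∈ S, F x) * (∑ x ∈ S, G x) :=
      Finset.sum_sq_le_sum_mul_sum_of_sq_eq_mul S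
        (fun x _ => hFnn x) (fun x _ => hGnn x)
        (fun x _ => Real.sq_sqrt (mul_nonneg (hFnn x) (hGnn x)))
    have hFsum : (∑ x ∈ S, F x) ≤ ((n : ℝ) + 1) ^ fdeg β := by
      have hnat := sum_antidiagonal_pow_le n β
      have : (∑ x ∈ S, F x) = ((∑ x ∈ Finset.HasAntidiagonal.antidiagonal β, n ^ fdeg x.2 : ℕ) : ℝ) := by
        push_cast
        rfl
      rw [this]
      calc ((∑ x ∈ Finset.HasAntidiagonal.antidiagonal β, n ^ fdeg x.2 : ℕ) : ℝ)
          ≤ (((n + 1) ^ fdeg β : ℕ) : ℝ) := by exact_mod_cast hnat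
        _ = ((n : ℝ) + 1) ^ fdeg β := by push_cast; ring
    have hGsum : (∑ x ∈ S, G x)
        = ∑ x ∈ S, MvPolynomial.coeff x.1 (sqPoly q) *
            MvPolynomial.coeff x.2 ((sqPoly q) ^ n) := by
      refine Finset.sum_congr rfl fun x _ => ?_
      rw [hG, coeff_sqPoly]
    calc (∑ x ∈ S, MvPolynomial.coeff x.1 q * MvPolynomial.coeff x.2 (q ^ n)) ^ 2
        = |∑ x ∈ S, MvPolynomial.coeff x.1 q * MvPolynomial.coeff x.2 (q ^ n)| ^ 2 := by
          rw [sq_abs]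
      _ ≤ (∑ x ∈ S, r x) ^ 2 := by
          refine pow_le_pow_left₀ (abs_nonneg _) hsum_abs 2
      _ ≤ (∑ x ∈ S, F x) * (∑ x ∈ S, G x) := hCS
      _ ≤ ((n : ℝ) + 1) ^ fdeg β * (∑ x ∈ S, G x) :=
          mul_le_mul_of_nonneg_right hFsum (Finset.sum_nonneg fun x _ => hGnn x)
      _ = ((n : ℝ) + 1) ^ fdeg β *
            (∑ x ∈ S, MvPolynomial.coeff x.1 (sqPoly q) *
              MvPolynomial.coeff x.2 ((sqPoly q) ^ n)) := by
          rw [hGsum]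

lemma eval_one_sqPoly {d : ℕ} (q : MvPolynomial (Fin d) ℝ) :
    MvPolynomial.eval (fun _ => (1 : ℝ)) (sqPoly q)
      = ∑ α ∈ q.support, (MvPolynomial.coeff α q) ^ 2 := by
  unfold sqPoly
  rw [map_sum]
  refine Finset.sum_congr rfl fun α _ => ?_
  rw [MvPolynomial.eval_monomial]
  simp [Finsupp.prod]

end MvNormAux

open MvNormAux in
/-- If `q` has degree at most `s` and `n ≥ 1`, then
`‖q^n‖² ≤ n^{n·s} · ‖q‖^{2n}`. -/
theorem mvNorm_pow_sq_le {d n s : ℕ} (hn : 1 ≤ n) (q : MvPolynomial (Fin d) ℝ)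
    (hq : q.totalDegree ≤ s) :
    (mvNorm (q ^ n)) ^ 2 ≤ (n : ℝ) ^ (n * s) * (mvNorm q) ^ (2 * n) := by
  classical
  set Q := sqPoly q with hQ
  have hnorm_sq : (mvNorm (q ^ n)) ^ 2
      = ∑ β ∈ (q ^ n).support, (MvPolynomial.coeff β (q ^ n)) ^ 2 := by
    rw [mvNorm, Real.sq_sqrt (Finset.sum_nonneg fun β _ => sq_nonneg _)]
  have hnormq_sq : (mvNorm q) ^ 2 = ∑ α ∈ q.support, (MvPolynomial.coeff α q) ^ 2 := by
    rw [mvNorm, Real.sq_sqrt (Finset.sum_nonneg fun α _ => sq_nonneg _)]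
  have hdeg : ∀ β ∈ (q ^ n).support, fdeg β ≤ n * s := by
    intro β hβ
    have h1 : fdeg β ≤ (q ^ n).totalDegree := MvPolynomial.le_totalDegree hβ
    have h2 : (q ^ n).totalDegree ≤ n * q.totalDegree := MvPolynomial.totalDegree_pow q n
    exact h1.trans (h2.trans (Nat.mul_le_mul_left n hq))
  have step1 : (mvNorm (q ^ n)) ^ 2
      ≤ ∑ β ∈ (q ^ n).support, (n : ℝ) ^ (n * s) * MvPolynomial.coeff β (Q ^ n) := by
    rw [hnorm_sq]
    refine Finset.sum_le_sum fun β hβ => ?_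
    calc (MvPolynomial.coeff β (q ^ n)) ^ 2
        ≤ (n : ℝ) ^ fdeg β * MvPolynomial.coeff β (Q ^ n) := pointwise q n hn β
      _ ≤ (n : ℝ) ^ (n * s) * MvPolynomial.coeff β (Q ^ n) := by
          refine mul_le_mul_of_nonneg_right ?_ (coeff_sqPoly_pow_nonneg q n β)
          exact pow_le_pow_right₀ (by exact_mod_cast hn) (hdeg β hβ)
  have step2 : ∑ β ∈ (q ^ n).support, MvPolynomial.coeff β (Q ^ n)
      ≤ ∑ β ∈ (Q ^ n).support, MvPolynomial.coeff β (Q ^ n) := by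
    calc ∑ β ∈ (q ^ n).support, MvPolynomial.coeff β (Q ^ n)
        ≤ ∑ β ∈ (q ^ n).support ∪ (Q ^ n).support, MvPolynomial.coeff β (Q ^ n) := by
          refine Finset.sum_le_sum_of_subset_of_nonneg Finset.subset_union_left
            fun β _ _ => coeff_sqPoly_pow_nonneg q n β
      _ = ∑ β ∈ (Q ^ n).support, MvPolynomial.coeff β (Q ^ n) := by
          refine (Finset.sum_subset Finset.subset_union_right fun β _ hβ => ?_).symm
          exact MvPolynomial.notMem_support_iff.mp hβ
  have step3 : ∑ β ∈ (Q ^ n).support, MvPolynomial.coeff β (Q ^ n)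
      = (∑ α ∈ q.support, (MvPolynomial.coeff α q) ^ 2) ^ n := by
    have heval : MvPolynomial.eval (fun _ => (1 : ℝ)) (Q ^ n)
        = (∑ α ∈ q.support, (MvPolynomial.coeff α q) ^ 2) ^ n := by
      rw [map_pow, hQ, eval_one_sqPoly]
    rw [← heval, MvPolynomial.eval_eq]
    refine Finset.sum_congr rfl fun β _ => ?_
    simp
  have hfinal : (mvNorm q) ^ (2 * n)
      = (∑ α ∈ q.support, (MvPolynomial.coeff α q) ^ 2) ^ n := by
    rw [pow_mul, hnormq_sq]
  calc (mvNorm (q ^ n)) ^ 2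
      ≤ ∑ β ∈ (q ^ n).support, (n : ℝ) ^ (n * s) * MvPolynomial.coeff β (Q ^ n) := step1
    _ = (n : ℝ) ^ (n * s) * ∑ β ∈ (q ^ n).support, MvPolynomial.coeff β (Q ^ n) := by
        rw [Finset.mul_sum]
    _ ≤ (n : ℝ) ^ (n * s) * ∑ β ∈ (Q ^ n).support, MvPolynomial.coeff β (Q ^ n) := by
        refine mul_le_mul_of_nonneg_left step2 (pow_nonneg (Nat.cast_nonneg n) _)
    _ = (n : ℝ) ^ (n * s) * (mvNorm q) ^ (2 * n) := by rw [step3, hfinal]
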